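/- Let 𝒞 be a Fraïssé class with Fraïssé limit U such that (1) 𝒞 is closed with respect to finite products, (2) 𝒞 has the homo amalgamation property (HAP), and (3) 𝒞 has the amalgamated extension property. Then rank(Pol U : Emb U) ≤ 2; in particular, Pol U is generated by Emb U together with one unary and one binary polymorphism. -/

import Mathlib

universe u v w

open FirstOrder FirstOrder.Language CategoryTheory

namespace UHomog

variable (L : FirstOrder.Language.{u, v})

/-- The class `𝒞̄` of countable structures whose age is contained in `K`. -/
def InBar (K : Set (Bundled.{w} L.Structure)) (A : Type w) [L.Structure A] : Prop :=
  Countable A ∧ L.age A ⊆ K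

/-- A homomorphism `u : U → T` is universal within `𝒞̄ = K̄` if every homomorphism from a member
of `K̄` to `T` factors through an embedding into `U`. -/
def IsUniversalHom (K : Set (Bundled.{w} L.Structure)) {U T : Type w}
    [L.Structure U] [L.Structure T] (u : U →[L] T) : Prop :=
  ∀ A : Bundled.{w} L.Structure, InBar L K A → ∀ h : A →[L] T,
    ∃ ι : A ↪[L] U, ∀ a : A, u (ι a) = h a

/-- A homomorphism `u : U → T` is homogeneous if every embedding of a finitely generated
substructure of `U` into `U` compatible with `u` extends to an automorphism of `U` compatible
with `u`. -/
def IsHomogeneousHom {U T : Type w} [L.Structure U] [L.Structure T] (u : U →[L] T) : Prop :=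
  ∀ S : L.Substructure U, S.FG → ∀ ι : S ↪[L] U,
    (∀ s : S, u (ι s) = u s) →
    ∃ α : U ≃[L] U, (∀ x : U, u (α x) = u x) ∧ ∀ s : S, α s = ι s

/-- An age: a class of finitely generated structures with countably many isomorphism types,
closed under isomorphism, with the hereditary property and the joint embedding property. -/
def IsAge (K : Set (Bundled.{w} L.Structure)) : Prop :=
  K.Nonempty ∧
  (∀ M : Bundled.{w} L.Structure, M ∈ K → Structure.FG L M) ∧
  (∀ M N : Bundled.{w} L.Structure, Nonempty (M ≃[L] N) → (M ∈ K ↔ N ∈ K)) ∧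
  (∃ S : Set (Bundled.{w} L.Structure), S.Countable ∧
    ∀ M ∈ K, ∃ N ∈ S, Nonempty (M ≃[L] N)) ∧
  Hereditary K ∧ JointEmbedding K

/-- The square `g₁ ∘ f₁ = g₂ ∘ f₂` is a pushout square in the category of countable structures
with age contained in `K`, with homomorphisms as morphisms. -/
def IsPushoutSquare (K : Set (Bundled.{w} L.Structure)) {A B₁ B₂ C : Type w}
    [L.Structure A] [L.Structure B₁] [L.Structure B₂] [L.Structure C]
    (f₁ : A ↪[L] B₁) (f₂ : A ↪[L] B₂) (g₁ : B₁ →[L] C) (g₂ : B₂ →[L] C) : Prop :=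
  g₁.comp f₁.toHom = g₂.comp f₂.toHom ∧
  ∀ D : Bundled.{w} L.Structure, InBar L K D → ∀ (k₁ : B₁ →[L] D) (k₂ : B₂ →[L] D),
    k₁.comp f₁.toHom = k₂.comp f₂.toHom →
    ∃! m : C →[L] D, m.comp g₁ = k₁ ∧ m.comp g₂ = k₂

/-- A strict Fraïssé class: a Fraïssé class in which every span of embeddings can be completed to
a canonical (pushout) amalgam. -/
def IsStrictFraisse (K : Set (Bundled.{w} L.Structure)) : Prop :=
  IsFraisse K ∧
  ∀ A B₁ B₂ : Bundled.{w} L.Structure, A ∈ K → B₁ ∈ K → B₂ ∈ K →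
    ∀ (f₁ : A ↪[L] B₁) (f₂ : A ↪[L] B₂),
      ∃ (C : Bundled.{w} L.Structure) (g₁ : B₁ →[L] C) (g₂ : B₂ →[L] C),
        C ∈ K ∧ IsPushoutSquare L K f₁ f₂ g₁ g₂

/-- A Fraïssé class `K₀` is free in the strict Fraïssé class `K` if it is closed with respect to
canonical (pushout) amalgams in `K`. -/
def IsFreeIn (K₀ K : Set (Bundled.{w} L.Structure)) : Prop :=
  K₀ ⊆ K ∧
  ∀ A B₁ B₂ : Bundled.{w} L.Structure, A ∈ K₀ → B₁ ∈ K₀ → B₂ ∈ K₀ →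
    ∀ (f₁ : A ↪[L] B₁) (f₂ : A ↪[L] B₂),
      ∃ (C : Bundled.{w} L.Structure) (g₁ : B₁ →[L] C) (g₂ : B₂ →[L] C),
        C ∈ K₀ ∧ IsPushoutSquare L K f₁ f₂ g₁ g₂

/-- The amalgamated extension property. -/
def AmalgamatedExtension (K : Set (Bundled.{w} L.Structure)) : Prop :=
  ∀ A B₁ B₂ T : Bundled.{w} L.Structure, A ∈ K → B₁ ∈ K → B₂ ∈ K → T ∈ K →
    ∀ (f₁ : A ↪[L] B₁) (f₂ : A ↪[L] B₂) (h₁ : B₁ →[L] T) (h₂ : B₂ →[L] T),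
      h₁.comp f₁.toHom = h₂.comp f₂.toHom →
      ∃ (C T' : Bundled.{w} L.Structure) (g₁ : B₁ ↪[L] C) (g₂ : B₂ ↪[L] C)
        (k : T ↪[L] T') (h : C →[L] T'),
        C ∈ K ∧ T' ∈ K ∧ g₁.comp f₁ = g₂.comp f₂ ∧
        h.comp g₁.toHom = k.toHom.comp h₁ ∧ h.comp g₂.toHom = k.toHom.comp h₂

/-- The homo amalgamation property (HAP). -/
def HAP (K : Set (Bundled.{w} L.Structure)) : Prop :=
  ∀ A B₁ B₂ : Bundled.{w} L.Structure, A ∈ K → B₁ ∈ K → B₂ ∈ K →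
    ∀ (f₁ : A ↪[L] B₁) (f₂ : A →[L] B₂),
      ∃ (C : Bundled.{w} L.Structure) (g₁ : B₁ →[L] C) (g₂ : B₂ ↪[L] C),
        C ∈ K ∧ g₁.comp f₁.toHom = g₂.toHom.comp f₂

/-- A homomorphism `r : A → B` is a retraction if it has a section. -/
def IsRetraction {A B : Type w} [L.Structure A] [L.Structure B] (r : A →[L] B) : Prop :=
  ∃ ι : B →[L] A, ∀ b : B, r (ι b) = b

end UHomog



namespace CloneTheory

/-- Finitary operations on `A`: the element `⟨n, f⟩` is an operation of arity `n + 1`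
(so all arities are `≥ 1`). -/
def Ops (A : Type w) : Type w := Σ n : ℕ, (Fin (n + 1) → A) → A

/-- `S` is a clone on `A`: it contains all projections and is closed under composition. -/
structure IsClone (A : Type w) (S : Set (Ops A)) : Prop where
  proj : ∀ (n : ℕ) (i : Fin (n + 1)), (⟨n, fun x => x i⟩ : Ops A) ∈ S
  comp : ∀ (n m : ℕ) (f : (Fin (n + 1) → A) → A) (g : Fin (n + 1) → (Fin (m + 1) → A) → A),
    (⟨n, f⟩ : Ops A) ∈ S → (∀ i, (⟨m, g i⟩ : Ops A) ∈ S) →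
    (⟨m, fun x => f fun i => g i x⟩ : Ops A) ∈ S

/-- The clone generated by a set of operations. -/
def cloneGen (A : Type w) (M : Set (Ops A)) : Set (Ops A) :=
  ⋂₀ {S : Set (Ops A) | IsClone A S ∧ M ⊆ S}

/-- The complex product of two sets of operations. -/
def cProd (A : Type w) (U V : Set (Ops A)) : Set (Ops A) :=
  {op | ∃ (n m : ℕ) (f : (Fin (n + 1) → A) → A) (g : Fin (n + 1) → (Fin (m + 1) → A) → A),
    (⟨n, f⟩ : Ops A) ∈ U ∧ (∀ i, (⟨m, g i⟩ : Ops A) ∈ V) ∧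
    op = ⟨m, fun x => f fun i => g i x⟩}

/-- The set `J_A^{(k)}` of projections of arity `k + 1`. -/
def projSet (A : Type w) (k : ℕ) : Set (Ops A) :=
  {op | ∃ i : Fin (k + 1), op = ⟨k, fun x => x i⟩}

/-- The sets `U^{[k,i]}`: operations of arity `k + 1` obtained from `U` by terms of depth
at most `i`. -/
def iter (A : Type w) (U : Set (Ops A)) (k : ℕ) : ℕ → Set (Ops A)
  | 0 => projSet A k
  | i + 1 => cProd A U (iter A U k i) ∪ iter A U k i

/-- The part of `F` of arity `k + 1`. -/
def arityPart (A : Type w) (F : Set (Ops A)) (k : ℕ) : Set (Ops A) :=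
  {op | op ∈ F ∧ op.1 = k}

/-- A clone `F` has the Bergman property if for every generating set `H` and every arity there
is a uniform depth bound generating the whole part of that arity. -/
def BergmanProperty (A : Type w) (F : Set (Ops A)) : Prop :=
  ∀ H : Set (Ops A), H ⊆ F → cloneGen A H = F →
    ∀ k : ℕ, ∃ n : ℕ, iter A H k n = arityPart A F k

/-- A clone `F` has uncountable cofinality: there is no countable increasing chain of proper
subclones of `F` whose union is `F`. -/
def UncountableCofinality (A : Type w) (F : Set (Ops A)) : Prop :=
  ¬ ∃ c : ℕ → Set (Ops A),
      (∀ n, IsClone A (c n)) ∧ (∀ n, c n ⊆ F) ∧ (∀ n, c n ⊆ c (n + 1)) ∧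
      (∀ n, c n ≠ F) ∧ (⋃ n, c n) = F

/-- A clone `F` has uncountable strong cofinality: there is no countable strong cofinal chain
for `F`. -/
def UncountableStrongCofinality (A : Type w) (F : Set (Ops A)) : Prop :=
  ¬ ∃ c : ℕ → Set (Ops A),
      (∀ n, c n ⊆ c (n + 1)) ∧ (∀ n, c n ⊆ F) ∧ (∀ n, c n ≠ F) ∧ (⋃ n, c n) = F ∧
      (∃ k₀ : ℕ, ∀ n, ∀ k, k₀ ≤ k → arityPart A (c n) k ≠ arityPart A F k) ∧
      (∀ n, ∃ m, ∀ k, iter A (c n) k 2 ⊆ c m)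

/-- A clone is finitely generated if it is generated by a finite set. -/
def FinitelyGeneratedClone (A : Type w) (F : Set (Ops A)) : Prop :=
  ∃ H : Set (Ops A), H.Finite ∧ H ⊆ F ∧ cloneGen A H = F

end CloneTheory

namespace CloneTheory

open FirstOrder FirstOrder.Language

/-- The product (power) structure on `ι → M`. -/
instance piStructure (L : FirstOrder.Language.{u, v}) (ι : Type*) (M : Type w)
    [L.Structure M] : L.Structure (ι → M) where
  funMap f x i := Structure.funMap f fun j => x j i
  RelMap r x := ∀ i, Structure.RelMap r fun j => x j i

/-- The product structure on `M × N`. -/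
instance prodStructure (L : FirstOrder.Language.{u, v}) (M N : Type w)
    [L.Structure M] [L.Structure N] : L.Structure (M × N) where
  funMap f x := (Structure.funMap f fun i => (x i).1, Structure.funMap f fun i => (x i).2)
  RelMap r x := Structure.RelMap r (fun i => (x i).1) ∧ Structure.RelMap r fun i => (x i).2

/-- The polymorphism clone of a structure `M`. -/
def PolSet (L : FirstOrder.Language.{u, v}) (M : Type w) [L.Structure M] : Set (Ops M) :=
  {op | ∃ h : (Fin (op.1 + 1) → M) →[L] M, ⇑h = op.2}

/-- An endomorphism of `M`, viewed as a unary operation. -/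
def homOp (L : FirstOrder.Language.{u, v}) (M : Type w) [L.Structure M] (e : M →[L] M) :
    Ops M := ⟨0, fun x => e (x 0)⟩

/-- The self-embedding monoid of `M`, viewed as a set of unary operations. -/
def EmbOps (L : FirstOrder.Language.{u, v}) (M : Type w) [L.Structure M] : Set (Ops M) :=
  {op | ∃ e : M ↪[L] M, op = homOp L M e.toHom}

end CloneTheory

namespace Stmt13Aux
open FirstOrder FirstOrder.Language CloneTheory

universe x y z

variable {L : FirstOrder.Language.{u, v}}

section prodhoms

variable {M : Type w} {U : Type w} [L.Structure M] [L.Structure U]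

/-- first projection hom from product -/
def fstHom : (U × U) →[L] U where
  toFun := Prod.fst
  map_fun' _ _ := rfl
  map_rel' _ _ h := h.1

def sndHom : (U × U) →[L] U where
  toFun := Prod.snd
  map_fun' _ _ := rfl
  map_rel' _ _ h := h.2

def pairHom (f g : M →[L] U) : M →[L] (U × U) where
  toFun m := (f m, g m)
  map_fun' F x := by
    refine Prod.ext ?_ ?_
    · exact f.map_fun' F x
    · exact g.map_fun' F x
  map_rel' r x h := ⟨f.map_rel' r x h, g.map_rel' r x h⟩

@[simp] lemma pairHom_apply (f g : M →[L] U) (m : M) : pairHom f g m = (f m, g m) := rfl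

def piHom {m : ℕ} (c : Fin m → (M →[L] U)) : M →[L] (Fin m → U) where
  toFun x i := c i x
  map_fun' F x := by
    funext i
    exact (c i).map_fun' F x
  map_rel' r x h i := (c i).map_rel' r x h

@[simp] lemma piHom_apply {m : ℕ} (c : Fin m → (M →[L] U)) (x : M) (i : Fin m) :
    piHom c x i = c i x := rfl

def projHom {m : ℕ} (i : Fin m) : (Fin m → U) →[L] U where
  toFun x := x i
  map_fun' _ _ := rfl
  map_rel' _ _ h := h i

@[simp] lemma projHom_apply {m : ℕ} (i : Fin m) (x : Fin m → U) : projHom (L := L) i x = x i := rfl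

end prodhoms

section Klemmas

variable {K : Set (Bundled.{w} L.Structure)} {U : Type w} [L.Structure U]
  [Countable (Σ l, L.Functions l)] [Countable U]

lemma mem_K_of_fg_sub_U (hU : IsFraisseLimit K U) {S : L.Substructure U} (h : S.FG) :
    (Bundled.of ↥S : Bundled.{w} L.Structure) ∈ K := by
  have := age.fg_substructure (M := U) h
  rw [hU.age] at this
  exact this

lemma exists_embedding_of_mem_K (hU : IsFraisseLimit K U) {C : Bundled.{w} L.Structure}
    (hC : C ∈ K) : Nonempty (C ↪[L] U) := by
  rw [← hU.age] at hC
  exact hC.2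

lemma fg_of_mem_K (hK : IsFraisse K) {C : Bundled.{w} L.Structure} (hC : C ∈ K) :
    Structure.FG L C := hK.FG C hC

lemma age_prod_subset (hK : IsFraisse K) (hU : IsFraisseLimit K U)
    (hprod : ∀ A B : Bundled.{w} L.Structure, A ∈ K → B ∈ K →
      (Bundled.of (↥A × ↥B) : Bundled.{w} L.Structure) ∈ K) :
    L.age (U × U) ⊆ K := by
  rintro N ⟨hNfg, ⟨m⟩⟩
  set P₁ := ((fstHom (L := L) (U := U)).comp m.toHom).range with hP₁
  set P₂ := ((sndHom (L := L) (U := U)).comp m.toHom).range with hP₂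
  have h₁ : (Bundled.of ↥P₁ : Bundled.{w} L.Structure) ∈ K := mem_K_of_fg_sub_U hU (hNfg.range _)
  have h₂ : (Bundled.of ↥P₂ : Bundled.{w} L.Structure) ∈ K := mem_K_of_fg_sub_U hU (hNfg.range _)
  have hW : (Bundled.of (↥P₁ × ↥P₂) : Bundled.{w} L.Structure) ∈ K := hprod _ _ h₁ h₂
  refine hK.hereditary _ hW ⟨hNfg, ⟨?_⟩⟩
  refine ⟨⟨fun x => (⟨(m x).1, ⟨x, rfl⟩⟩, ⟨(m x).2, ⟨x, rfl⟩⟩), ?_⟩, ?_, ?_⟩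
  · intro x y hxy
    apply m.injective
    refine Prod.ext ?_ ?_
    · exact congrArg (fun p => (p.1 : U)) hxy
    · exact congrArg (fun p => (p.2 : U)) hxy
  · intro n F x
    refine Prod.ext (Subtype.ext ?_) (Subtype.ext ?_)
    · exact congrArg Prod.fst (m.map_fun' F x)
    · exact congrArg Prod.snd (m.map_fun' F x)
  · intro n r x
    exact m.map_rel' r x

/-- The extension property of the Fraïssé limit. -/
lemma ext_U (hK : IsFraisse K) (hU : IsFraisseLimit K U) {S : L.Substructure U} (hS : S.FG)
    {C : Bundled.{w} L.Structure} (hC : C ∈ K) (β : ↥S ↪[L] C) :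
    ∃ δ : C ↪[L] U, ∀ s : ↥S, δ (β s) = (s : U) := by
  have hfg : Structure.FG L ↥S := (S.fg_iff_structure_fg).1 hS
  have hne : Nonempty (C ↪[L] U) := exists_embedding_of_mem_K hU hC
  obtain ⟨f', hf'⟩ := hU.ultrahomogeneous.extend_embedding hfg (h := hne) S.subtype β
  refine ⟨f', fun s => ?_⟩
  have := congrFun (congrArg (fun (e : ↥S ↪[L] U) => (e : ↥S → U)) hf') s
  simpa using this.symm

end Klemmas

end Stmt13Aux

namespace Stmt13Aux
open FirstOrder FirstOrder.Language CloneTheory UHomog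

set_option linter.unusedSectionVars false
set_option linter.unusedVariables false

section Hext

variable {L : FirstOrder.Language.{u, v}}
variable {K : Set (Bundled.{w} L.Structure)} {U : Type w} [L.Structure U]
  [Countable (Σ l, L.Functions l)] [Countable U]

/-- Homomorphism extension along embeddings, target `U`. -/
lemma hext_U (hK : IsFraisse K) (hU : IsFraisseLimit K U) (hhap : HAP L K)
    {T C : Bundled.{w} L.Structure} (hT : T ∈ K) (hC : C ∈ K) (k : T ↪[L] C) (q : T →[L] U) :
    ∃ ε : C →[L] U, ∀ t : T, ε (k t) = q t := by
  set R := q.range with hR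
  have hRfg : R.FG := (fg_of_mem_K hK hT).range q
  have hRK : (Bundled.of ↥R : Bundled.{w} L.Structure) ∈ K := mem_K_of_fg_sub_U hU hRfg
  set q' : T →[L] ↥R := Hom.codRestrict R q (fun t => q.mem_range_self t) with hq'
  obtain ⟨Ch, g₁, g₂, hCh, hcomm⟩ := hhap T C (Bundled.of ↥R) hT hC hRK k q'
  obtain ⟨δ, hδ⟩ := ext_U hK hU hRfg hCh g₂
  refine ⟨δ.toHom.comp g₁, fun t => ?_⟩
  have h1 : g₁ (k t) = g₂ (q' t) := by
    have := congrFun (congrArg (fun (h : T →[L] Ch) => (h : T → Ch)) hcomm) t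
    exact this
  show δ (g₁ (k t)) = q t
  rw [h1]
  exact hδ (q' t)

/-- Homomorphism extension along embeddings, target `U × U`. -/
lemma hext_V (hK : IsFraisse K) (hU : IsFraisseLimit K U) (hhap : HAP L K)
    (hprod : ∀ A B : Bundled.{w} L.Structure, A ∈ K → B ∈ K →
      (Bundled.of (↥A × ↥B) : Bundled.{w} L.Structure) ∈ K)
    {T C : Bundled.{w} L.Structure} (hT : T ∈ K) (hC : C ∈ K) (k : T ↪[L] C)
    (q : T →[L] (U × U)) :
    ∃ ε : C →[L] (U × U), ∀ t : T, ε (k t) = q t := by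
  set R := q.range with hR
  have hRfg : R.FG := (fg_of_mem_K hK hT).range q
  have hRK : (Bundled.of ↥R : Bundled.{w} L.Structure) ∈ K :=
    age_prod_subset hK hU hprod (age.fg_substructure hRfg)
  set q' : T →[L] ↥R := Hom.codRestrict R q (fun t => q.mem_range_self t) with hq'
  obtain ⟨Ch, g₁, g₂, hCh, hcomm⟩ := hhap T C (Bundled.of ↥R) hT hC hRK k q'
  obtain ⟨θ₁, hθ₁⟩ := hext_U hK hU hhap hRK hCh g₂
    ((fstHom (L := L) (U := U)).comp R.subtype.toHom)
  obtain ⟨θ₂, hθ₂⟩ := hext_U hK hU hhap hRK hCh g₂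
    ((sndHom (L := L) (U := U)).comp R.subtype.toHom)
  refine ⟨(pairHom θ₁ θ₂).comp g₁, fun t => ?_⟩
  have h1 : g₁ (k t) = g₂ (q' t) := by
    have := congrFun (congrArg (fun (h : T →[L] Ch) => (h : T → Ch)) hcomm) t
    exact this
  show pairHom θ₁ θ₂ (g₁ (k t)) = q t
  rw [h1]
  refine Prod.ext ?_ ?_
  · exact hθ₁ (q' t)
  · exact hθ₂ (q' t)

end Hext
end Stmt13Aux

namespace Stmt13Aux
open FirstOrder FirstOrder.Language CloneTheory UHomog

set_option linter.unusedSectionVars false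
set_option linter.unusedVariables false

section CfgSec

variable {L : FirstOrder.Language.{u, v}}
variable {K : Set (Bundled.{w} L.Structure)} {U : Type w} [L.Structure U]
  [Countable (Σ l, L.Functions l)] [Countable U]

lemma symmRange {C : Type w} [L.Structure C] (δ : C ↪[L] U) (x : C)
    (hmem : δ x ∈ δ.toHom.range) :
    δ.equivRange.symm ⟨δ x, hmem⟩ = x := by
  have h : (⟨δ x, hmem⟩ : ↥δ.toHom.range) = δ.equivRange x :=
    Subtype.ext (δ.equivRange_apply x).symm
  rw [h]
  exact δ.equivRange.symm_apply_apply x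

/-- A finite approximation to the pair (embedding `U × U ↪ U`, retraction `U → U × U`). -/
structure Cfg (L : FirstOrder.Language.{u, v}) (U : Type w) [L.Structure U] where
  A : L.Substructure (U × U)
  D : L.Substructure U
  hA : A.FG
  hD : D.FG
  e : ↥A ↪[L] U
  r : ↥D →[L] (U × U)
  he : ∀ a : ↥A, e a ∈ D
  hre : ∀ a : ↥A, r ⟨e a, he a⟩ = (a : U × U)

def Cfg.le (c c' : Cfg L U) : Prop :=
  ∃ (hA : c.A ≤ c'.A) (hD : c.D ≤ c'.D),
    (∀ a : ↥c.A, c'.e (Substructure.inclusion hA a) = c.e a) ∧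
    (∀ d : ↥c.D, c'.r (Substructure.inclusion hD d) = c.r d)

lemma Cfg.le_refl (c : Cfg L U) : c.le c := by
  refine ⟨le_rfl, le_rfl, fun a => congrArg c.e (Subtype.ext rfl), fun d =>
    congrArg c.r (Subtype.ext rfl)⟩

lemma Cfg.le_trans {c₁ c₂ c₃ : Cfg L U} (h₁ : c₁.le c₂) (h₂ : c₂.le c₃) : c₁.le c₃ := by
  obtain ⟨hA₁, hD₁, he₁, hr₁⟩ := h₁
  obtain ⟨hA₂, hD₂, he₂, hr₂⟩ := h₂
  refine ⟨hA₁.trans hA₂, hD₁.trans hD₂, fun a => ?_, fun d => ?_⟩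
  · have : Substructure.inclusion (hA₁.trans hA₂) a =
        Substructure.inclusion hA₂ (Substructure.inclusion hA₁ a) := Subtype.ext rfl
    rw [this, he₂, he₁]
  · have : Substructure.inclusion (hD₁.trans hD₂) d =
        Substructure.inclusion hD₂ (Substructure.inclusion hD₁ d) := Subtype.ext rfl
    rw [this, hr₂, hr₁]

lemma memV (hK : IsFraisse K) (hU : IsFraisseLimit K U)
    (hprod : ∀ A B : Bundled.{w} L.Structure, A ∈ K → B ∈ K →
      (Bundled.of (↥A × ↥B) : Bundled.{w} L.Structure) ∈ K) {S : L.Substructure (U × U)} (h : S.FG) :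
    (Bundled.of ↥S : Bundled.{w} L.Structure) ∈ K :=
  age_prod_subset hK hU hprod (age.fg_substructure h)

variable (hK : IsFraisse K) (hU : IsFraisseLimit K U) (hhap : HAP L K)
  (haep : AmalgamatedExtension L K)
  (hprod : ∀ A B : Bundled.{w} L.Structure, A ∈ K → B ∈ K →
      (Bundled.of (↥A × ↥B) : Bundled.{w} L.Structure) ∈ K)

include hK hU hhap hprod in
lemma Cfg.stepB (c : Cfg L U) (d : U) : ∃ c' : Cfg L U, c.le c' ∧ d ∈ c'.D := by
  set D' := c.D ⊔ Substructure.closure L {d} with hD'def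
  have hle : c.D ≤ D' := le_sup_left
  have hD' : D'.FG := c.hD.sup (Substructure.fg_closure (Set.finite_singleton d))
  have hTK : (Bundled.of ↥c.D : Bundled.{w} L.Structure) ∈ K := mem_K_of_fg_sub_U hU c.hD
  have hCK : (Bundled.of ↥D' : Bundled.{w} L.Structure) ∈ K := mem_K_of_fg_sub_U hU hD'
  obtain ⟨r', hr'⟩ := hext_V hK hU hhap hprod hTK hCK (Substructure.inclusion hle) c.r
  refine ⟨⟨c.A, D', c.hA, hD', c.e, r', fun a => hle (c.he a), fun a => ?_⟩, ?_, ?_⟩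
  · exact (hr' ⟨c.e a, c.he a⟩).trans (c.hre a)
  · exact ⟨le_rfl, hle, fun a => congrArg c.e (Subtype.ext rfl), fun x => hr' x⟩
  · exact (le_sup_right : Substructure.closure L {d} ≤ D')
      (Substructure.subset_closure (Set.mem_singleton d))

include hK hU hhap haep hprod in
lemma Cfg.stepA (c : Cfg L U) (A' : L.Substructure (U × U)) (hA' : A'.FG) (hle : c.A ≤ A') :
    ∃ c' : Cfg L U, c.le c' ∧ A' ≤ c'.A := by
  classical
  set T : L.Substructure (U × U) := c.r.range ⊔ A' with hTdef
  have hTfg : T.FG := (((c.D).fg_iff_structure_fg).1 c.hD).range c.r |>.sup hA'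
  have hAK : (Bundled.of ↥c.A : Bundled.{w} L.Structure) ∈ K := memV hK hU hprod c.hA
  have hDK : (Bundled.of ↥c.D : Bundled.{w} L.Structure) ∈ K := mem_K_of_fg_sub_U hU c.hD
  have hA'K : (Bundled.of ↥A' : Bundled.{w} L.Structure) ∈ K := memV hK hU hprod hA'
  have hTK : (Bundled.of ↥T : Bundled.{w} L.Structure) ∈ K := memV hK hU hprod hTfg
  set f₁ : ↥c.A ↪[L] ↥c.D := FirstOrder.Language.Embedding.codRestrict c.D c.e c.he with hf₁
  set f₂ : ↥c.A ↪[L] ↥A' := Substructure.inclusion hle with hf₂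
  have hrle : c.r.range ≤ T := le_sup_left
  set h₁ : ↥c.D →[L] ↥T := Hom.codRestrict T c.r
    (fun x => hrle (c.r.mem_range_self x)) with hh₁
  set h₂ : ↥A' →[L] ↥T := (Substructure.inclusion le_sup_right).toHom with hh₂
  have hcompat : h₁.comp f₁.toHom = h₂.comp f₂.toHom := by
    apply Hom.ext
    intro a
    apply Subtype.ext
    show c.r ⟨c.e a, c.he a⟩ = ((a : U × U))
    exact c.hre a
  obtain ⟨C, T', g₁, g₂, k, h, hCK, hT'K, hcomm0, hcomm1, hcomm2⟩ :=
    haep (Bundled.of ↥c.A) (Bundled.of ↥c.D) (Bundled.of ↥A') (Bundled.of ↥T)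
      hAK hDK hA'K hTK f₁ f₂ h₁ h₂ hcompat
  obtain ⟨δ, hδ⟩ := ext_U hK hU c.hD hCK g₁
  obtain ⟨ε, hε⟩ := hext_V hK hU hhap hprod hTK hT'K k (T.subtype.toHom)
  have hcomm0' : ∀ a : ↥c.A, g₁ (f₁ a) = g₂ (f₂ a) := by
    intro a
    have := congrFun (congrArg (fun (t : ↥c.A ↪[L] C) => (t : ↥c.A → C)) hcomm0) a
    exact this
  have hcomm1' : ∀ x : ↥c.D, h (g₁ x) = k (h₁ x) := by
    intro x
    have := congrFun (congrArg (fun (t : ↥c.D →[L] T') => (t : ↥c.D → T')) hcomm1) x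
    exact this
  have hcomm2' : ∀ x : ↥A', h (g₂ x) = k (h₂ x) := by
    intro x
    have := congrFun (congrArg (fun (t : ↥A' →[L] T') => (t : ↥A' → T')) hcomm2) x
    exact this
  set D'' := δ.toHom.range with hD''def
  have hD'' : D''.FG := (fg_of_mem_K hK hCK).range δ.toHom
  have hDle : c.D ≤ D'' := by
    intro x hx
    exact ⟨g₁ ⟨x, hx⟩, hδ ⟨x, hx⟩⟩
  have he' : ∀ a : ↥A', δ (g₂ a) ∈ D'' := fun a => ⟨g₂ a, rfl⟩
  set r' : ↥D'' →[L] (U × U) :=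
    ε.comp (h.comp (δ.equivRange.symm.toEmbedding.toHom)) with hr'def
  have hr'eval : ∀ (x : C) (hmem : δ x ∈ D''), r' ⟨δ x, hmem⟩ = ε (h x) := by
    intro x hmem
    show ε (h (δ.equivRange.symm ⟨δ x, hmem⟩)) = ε (h x)
    rw [symmRange δ x hmem]
  refine ⟨⟨A', D'', hA', hD'', δ.comp g₂, r', he', fun a => ?_⟩, ⟨hle, hDle, fun a => ?_, fun dd => ?_⟩, le_rfl⟩
  · -- retraction property
    show r' ⟨δ (g₂ a), he' a⟩ = (a : U × U)
    exact (hr'eval (g₂ a) (he' a)).trans ((congrArg ε (hcomm2' a)).trans (hε (h₂ a)))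
  · -- e extends
    show δ (g₂ (Substructure.inclusion hle a)) = c.e a
    exact ((congrArg δ (hcomm0' a)).symm).trans (hδ (f₁ a))
  · -- r extends
    have hsub : (Substructure.inclusion hDle dd) =
        (⟨δ (g₁ dd), ⟨g₁ dd, rfl⟩⟩ : ↥D'') := Subtype.ext (hδ dd).symm
    rw [hsub]
    exact (hr'eval (g₁ dd) _).trans ((congrArg ε (hcomm1' dd)).trans (hε (h₁ dd)))

include hK hU hprod in
lemma Cfg.init : Nonempty (Cfg L U) := by
  have hbot : (⊥ : L.Substructure (U × U)).FG := Substructure.fg_bot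
  have hbotK : (Bundled.of ↥(⊥ : L.Substructure (U × U)) : Bundled.{w} L.Structure) ∈ K :=
    memV hK hU hprod hbot
  obtain ⟨j⟩ := exists_embedding_of_mem_K hU hbotK
  refine ⟨⟨⊥, j.toHom.range, hbot,
    (((⊥ : L.Substructure (U × U)).fg_iff_structure_fg).1 hbot).range j.toHom,
    j, ((⊥ : L.Substructure (U × U)).subtype.toHom).comp
      (j.equivRange.symm.toEmbedding.toHom),
    fun a => j.toHom.mem_range_self a, fun a => ?_⟩⟩
  exact congrArg (⊥ : L.Substructure (U × U)).subtype (symmRange j a (j.toHom.mem_range_self a))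

end CfgSec
end Stmt13Aux

namespace Stmt13Aux
open FirstOrder FirstOrder.Language FirstOrder.Language.Structure CloneTheory UHomog

set_option linter.unusedSectionVars false
set_option linter.unusedVariables false
set_option maxHeartbeats 1000000

section Limit

variable {L : FirstOrder.Language.{u, v}}
variable {K : Set (Bundled.{w} L.Structure)} {U : Type w} [L.Structure U]
  [Countable (Σ l, L.Functions l)] [Countable U]

lemma Cfg.le.e_eq {c c' : Cfg L U} (h : c.le c') (hA : c.A ≤ c'.A) (a : ↥c.A) :
    c'.e (Substructure.inclusion hA a) = c.e a := by
  obtain ⟨hA', _, he, _⟩ := h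
  have h2 : Substructure.inclusion hA a = Substructure.inclusion hA' a := Subtype.ext rfl
  rw [h2]
  exact he a

lemma Cfg.le.r_eq {c c' : Cfg L U} (h : c.le c') (hD : c.D ≤ c'.D) (d : ↥c.D) :
    c'.r (Substructure.inclusion hD d) = c.r d := by
  obtain ⟨_, hD', _, hr⟩ := h
  have h2 : Substructure.inclusion hD d = Substructure.inclusion hD' d := Subtype.ext rfl
  rw [h2]
  exact hr d

lemma Cfg.le.monoA {c c' : Cfg L U} (h : c.le c') : c.A ≤ c'.A := h.choose
lemma Cfg.le.monoD {c c' : Cfg L U} (h : c.le c') : c.D ≤ c'.D := h.choose_spec.choose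

theorem exists_retraction (hK : IsFraisse K) (hU : IsFraisseLimit K U) (hhap : HAP L K)
    (haep : AmalgamatedExtension L K)
    (hprod : ∀ A B : Bundled.{w} L.Structure, A ∈ K → B ∈ K →
      (Bundled.of (↥A × ↥B) : Bundled.{w} L.Structure) ∈ K)
    (hne : Nonempty U) :
    ∃ (E : (U × U) ↪[L] U) (ρ : U →[L] (U × U)), ∀ x : U × U, ρ (E x) = x := by
  classical
  have hneV : Nonempty (U × U) := ⟨hne.some, hne.some⟩
  obtain ⟨su, hsu⟩ := exists_surjective_nat U
  obtain ⟨sv, hsv⟩ := exists_surjective_nat (U × U)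
  -- combined step
  have step : ∀ (c : Cfg L U) (x : U × U) (d : U),
      ∃ c', c.le c' ∧ x ∈ c'.A ∧ d ∈ c'.D := by
    intro c x d
    obtain ⟨c₁, h₁, hx⟩ := c.stepA hK hU hhap haep hprod
      (c.A ⊔ Substructure.closure L {x})
      (c.hA.sup (Substructure.fg_closure (Set.finite_singleton x))) le_sup_left
    obtain ⟨c₂, h₂, hd⟩ := c₁.stepB hK hU hhap hprod d
    refine ⟨c₂, Cfg.le_trans h₁ h₂, ?_, hd⟩
    exact h₂.monoA (hx ((le_sup_right :
      Substructure.closure L {x} ≤ c.A ⊔ Substructure.closure L {x})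
      (Substructure.subset_closure (Set.mem_singleton x))))
  choose F hF1 hF2 hF3 using step
  obtain ⟨c₀⟩ := Cfg.init hK hU hprod (K := K) (U := U)
  set seq : ℕ → Cfg L U := fun n => Nat.rec c₀ (fun n c => F c (sv n) (su n)) n with hseq
  have hstep : ∀ n, (seq n).le (seq (n+1)) := fun n => hF1 _ _ _
  have hxmem : ∀ n, sv n ∈ (seq (n+1)).A := fun n => hF2 _ _ _
  have hdmem : ∀ n, su n ∈ (seq (n+1)).D := fun n => hF3 _ _ _
  have hmono : ∀ m n, m ≤ n → (seq m).le (seq n) := by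
    intro m n h
    induction n, h using Nat.le_induction with
    | base => exact Cfg.le_refl _
    | succ n hmn ih => exact Cfg.le_trans ih (hstep n)
  have hexA : ∀ x : U × U, ∃ n, x ∈ (seq n).A := by
    intro x
    obtain ⟨n, rfl⟩ := hsv x
    exact ⟨n + 1, hxmem n⟩
  have hexD : ∀ d : U, ∃ n, d ∈ (seq n).D := by
    intro d
    obtain ⟨n, rfl⟩ := hsu d
    exact ⟨n + 1, hdmem n⟩
  -- the limit functions
  set efun : (U × U) → U :=
    fun x => (seq (Nat.find (hexA x))).e ⟨x, Nat.find_spec (hexA x)⟩ with hefun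
  set rfun : U → (U × U) :=
    fun d => (seq (Nat.find (hexD d))).r ⟨d, Nat.find_spec (hexD d)⟩ with hrfun
  have e_eq2 : ∀ m n (_ : m ≤ n) (x : U × U) (hxm : x ∈ (seq m).A) (hxn : x ∈ (seq n).A),
      (seq n).e ⟨x, hxn⟩ = (seq m).e ⟨x, hxm⟩ := by
    intro m n h x hxm hxn
    have h2 : (⟨x, hxn⟩ : ↥(seq n).A) =
        Substructure.inclusion ((hmono m n h).monoA) ⟨x, hxm⟩ := Subtype.ext rfl
    rw [h2]
    exact (hmono m n h).e_eq _ _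
  have r_eq2 : ∀ m n (_ : m ≤ n) (d : U) (hdm : d ∈ (seq m).D) (hdn : d ∈ (seq n).D),
      (seq n).r ⟨d, hdn⟩ = (seq m).r ⟨d, hdm⟩ := by
    intro m n h d hdm hdn
    have h2 : (⟨d, hdn⟩ : ↥(seq n).D) =
        Substructure.inclusion ((hmono m n h).monoD) ⟨d, hdm⟩ := Subtype.ext rfl
    rw [h2]
    exact (hmono m n h).r_eq _ _
  have eagree : ∀ (n : ℕ) (x : U × U) (hx : x ∈ (seq n).A),
      efun x = (seq n).e ⟨x, hx⟩ := by
    intro n x hx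
    rcases le_total (Nat.find (hexA x)) n with h | h
    · exact (e_eq2 _ n h x (Nat.find_spec (hexA x)) hx).symm
    · exact e_eq2 n _ h x hx (Nat.find_spec (hexA x))
  have ragree : ∀ (n : ℕ) (d : U) (hd : d ∈ (seq n).D),
      rfun d = (seq n).r ⟨d, hd⟩ := by
    intro n d hd
    rcases le_total (Nat.find (hexD d)) n with h | h
    · exact (r_eq2 _ n h d (Nat.find_spec (hexD d)) hd).symm
    · exact r_eq2 n _ h d hd (Nat.find_spec (hexD d))
  -- bound a finite family into one stage
  have bound : ∀ {k : ℕ} (xs : Fin k → (U × U)), ∃ n, ∀ i, xs i ∈ (seq n).A := by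
    intro k xs
    refine ⟨(Finset.univ.sup fun i => Nat.find (hexA (xs i))), fun i => ?_⟩
    exact (hmono _ _ (Finset.le_sup (Finset.mem_univ i))).monoA (Nat.find_spec (hexA (xs i)))
  have boundD : ∀ {k : ℕ} (xs : Fin k → U), ∃ n, ∀ i, xs i ∈ (seq n).D := by
    intro k xs
    refine ⟨(Finset.univ.sup fun i => Nat.find (hexD (xs i))), fun i => ?_⟩
    exact (hmono _ _ (Finset.le_sup (Finset.mem_univ i))).monoD (Nat.find_spec (hexD (xs i)))
  -- the embedding
  refine ⟨⟨⟨efun, ?_⟩, ?_, ?_⟩, ⟨rfun, ?_, ?_⟩, ?_⟩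
  · -- injective
    intro x y hxy
    obtain ⟨n, hn⟩ := bound ![x, y]
    have hx : x ∈ (seq n).A := hn 0
    have hy : y ∈ (seq n).A := hn 1
    rw [eagree n x hx, eagree n y hy] at hxy
    have := (seq n).e.injective hxy
    exact congrArg Subtype.val this
  · -- map_fun
    intro k F xs
    obtain ⟨n, hn⟩ := bound xs
    have hmem : funMap F xs ∈ (seq n).A := (seq n).A.fun_mem F xs hn
    show efun (funMap F xs) = funMap F (fun i => efun (xs i))
    rw [eagree n _ hmem]
    have h2 : (⟨funMap F xs, hmem⟩ : ↥(seq n).A) = funMap F (fun i => ⟨xs i, hn i⟩) :=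
      Subtype.ext rfl
    rw [h2, (seq n).e.map_fun]
    congr 1
    funext i
    show ((seq n).e ⟨xs i, hn i⟩) = efun (xs i)
    exact (eagree n (xs i) (hn i)).symm
  · -- map_rel
    intro k r xs
    obtain ⟨n, hn⟩ := bound xs
    have h2 : (fun i => efun (xs i)) = (fun i => (seq n).e ⟨xs i, hn i⟩) := by
      funext i
      exact eagree n (xs i) (hn i)
    show RelMap r (fun i => efun (xs i)) ↔ RelMap r xs
    rw [h2]
    exact (seq n).e.map_rel r (fun i => ⟨xs i, hn i⟩)
  · -- hom map_fun
    intro k F xs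
    obtain ⟨n, hn⟩ := boundD xs
    have hmem : funMap F xs ∈ (seq n).D := (seq n).D.fun_mem F xs hn
    show rfun (funMap F xs) = funMap F (fun i => rfun (xs i))
    rw [ragree n _ hmem]
    have h2 : (⟨funMap F xs, hmem⟩ : ↥(seq n).D) = funMap F (fun i => ⟨xs i, hn i⟩) :=
      Subtype.ext rfl
    rw [h2, (seq n).r.map_fun]
    congr 1
    funext i
    show ((seq n).r ⟨xs i, hn i⟩) = rfun (xs i)
    exact (ragree n (xs i) (hn i)).symm
  · -- hom map_rel
    intro k r xs hrel
    obtain ⟨n, hn⟩ := boundD xs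
    have h2 : (fun i => rfun (xs i)) = (fun i => (seq n).r ⟨xs i, hn i⟩) := by
      funext i
      exact ragree n (xs i) (hn i)
    show RelMap r (fun i => rfun (xs i))
    rw [h2]
    exact (seq n).r.map_rel r (fun i => ⟨xs i, hn i⟩) hrel
  · -- retraction
    intro x
    obtain ⟨n, hx⟩ := hexA x
    have h1 : efun x = (seq n).e ⟨x, hx⟩ := eagree n x hx
    have hd : efun x ∈ (seq n).D := by
      rw [h1]; exact (seq n).he ⟨x, hx⟩
    show rfun (efun x) = x
    rw [ragree n _ hd]
    have h2 : (⟨efun x, hd⟩ : ↥(seq n).D) = ⟨(seq n).e ⟨x, hx⟩, (seq n).he ⟨x, hx⟩⟩ :=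
      Subtype.ext h1
    rw [h2]
    exact (seq n).hre ⟨x, hx⟩

end Limit
end Stmt13Aux

namespace Stmt13Aux
open FirstOrder FirstOrder.Language FirstOrder.Language.Structure CloneTheory UHomog

set_option linter.unusedSectionVars false
set_option linter.unusedVariables false
set_option maxHeartbeats 1000000

section CloneSec

variable {L : FirstOrder.Language.{u, v}} {U : Type w} [L.Structure U]

lemma polset_isClone : IsClone U (PolSet L U) where
  proj n i := ⟨projHom i, rfl⟩
  comp n m f g hf hg := by
    obtain ⟨hf', hfe⟩ := hf
    choose hg' hge using hg
    refine ⟨hf'.comp (piHom hg'), ?_⟩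
    funext x
    show hf' (fun i => hg' i x) = f fun i => g i x
    exact (congrFun hfe _).trans (congrArg f (funext fun i => congrFun (hge i) x))

lemma embops_subset_polset : EmbOps L U ⊆ PolSet L U := by
  rintro op ⟨e, rfl⟩
  exact ⟨e.toHom.comp (projHom 0), rfl⟩

/-- pairing a hom with the identity gives an embedding into the product -/
def pairGraph (w : U →[L] U) : U ↪[L] (U × U) where
  toFun x := (w x, x)
  inj' x y hxy := congrArg Prod.snd hxy
  map_fun' F x := Prod.ext (w.map_fun F x) rfl
  map_rel' r x := ⟨fun h => h.2, fun h => ⟨w.map_rel r x h, h⟩⟩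

/-- Iterated pairing embedding term `E_k`. -/
def efn (E : (U × U) → U) : ∀ k, (Fin (k + 1) → U) → U
  | 0 => fun x => x 0
  | (k+1) => fun x => E (efn E k (fun i => x i.castSucc), x (Fin.last (k+1)))

/-- Coordinate retraction homs `R_k`. -/
def coordFn (ρ₁ ρ₂ : U →[L] U) : ∀ k, Fin (k + 1) → (U →[L] U)
  | 0 => fun _ => Hom.id L U
  | (k+1) => fun i => Fin.lastCases ρ₂ (fun j => (coordFn ρ₁ ρ₂ k j).comp ρ₁) i

lemma coord_efn (E : (U × U) → U) (ρ₁ ρ₂ : U →[L] U)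
    (h1 : ∀ v, ρ₁ (E v) = v.1) (h2 : ∀ v, ρ₂ (E v) = v.2) :
    ∀ (k : ℕ) (x : Fin (k + 1) → U) (i : Fin (k + 1)),
      coordFn ρ₁ ρ₂ k i (efn E k x) = x i := by
  intro k
  induction k with
  | zero =>
    intro x i
    have h : i = 0 := Fin.fin_one_eq_zero i
    subst h
    rfl
  | succ k ih =>
    intro x i
    refine Fin.lastCases ?_ ?_ i
    · show coordFn ρ₁ ρ₂ (k+1) (Fin.last (k+1)) (efn E (k+1) x) = x (Fin.last (k+1))
      have hc : coordFn ρ₁ ρ₂ (k+1) (Fin.last (k+1)) = ρ₂ := by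
        simp [coordFn]
      rw [hc]
      show ρ₂ (E (efn E k (fun i => x i.castSucc), x (Fin.last (k+1)))) = x (Fin.last (k+1))
      rw [h2]
    · intro j
      have hc : coordFn ρ₁ ρ₂ (k+1) j.castSucc = (coordFn ρ₁ ρ₂ k j).comp ρ₁ := by
        simp [coordFn]
      rw [hc]
      show coordFn ρ₁ ρ₂ k j (ρ₁ (efn E (k+1) x)) = x j.castSucc
      have hr : ρ₁ (efn E (k+1) x) = efn E k (fun i => x i.castSucc) := by
        show ρ₁ (E (efn E k (fun i => x i.castSucc), x (Fin.last (k+1)))) = _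
        rw [h1]
      rw [hr]
      exact ih (fun i => x i.castSucc) j

lemma gen_lemma (E : (U × U) ↪[L] U) (ρ : U →[L] (U × U))
    (hretr : ∀ x : U × U, ρ (E x) = x)
    (S : Set (Ops U)) (hS : IsClone U S)
    (hsub : EmbOps L U ∪ {homOp L U ((fstHom (L := L) (U := U)).comp ρ),
      (⟨1, fun x => E (x 0, x 1)⟩ : Ops U)} ⊆ S)
    (k : ℕ) (p : (Fin (k + 1) → U) →[L] U) :
    (⟨k, ⇑p⟩ : Ops U) ∈ S := by
  classical
  set ρ₁ : U →[L] U := (fstHom (L := L) (U := U)).comp ρ with hρ₁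
  set ρ₂ : U →[L] U := (sndHom (L := L) (U := U)).comp ρ with hρ₂
  have h1 : ∀ v : U × U, ρ₁ (E v) = v.1 := fun v => congrArg Prod.fst (hretr v)
  have h2 : ∀ v : U × U, ρ₂ (E v) = v.2 := fun v => congrArg Prod.snd (hretr v)
  have hgmem : (⟨1, fun x => E (x 0, x 1)⟩ : Ops U) ∈ S := by
    apply hsub
    right
    right
    rfl
  have hfmem : (homOp L U ρ₁) ∈ S := by
    apply hsub
    right
    left
    rfl
  -- E_k terms are in S
  have memE : ∀ k, (⟨k, efn (⇑E) k⟩ : Ops U) ∈ S := by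
    intro k
    induction k with
    | zero => exact hS.proj 0 0
    | succ k ih =>
      have hr1 : (⟨k+1, fun x : Fin (k+2) → U => efn (⇑E) k (fun i => x i.castSucc)⟩ : Ops U)
          ∈ S :=
        hS.comp k (k+1) (efn (⇑E) k) (fun i x => x i.castSucc) ih
          (fun i => hS.proj (k+1) i.castSucc)
      have hr3 := hS.comp 1 (k+1) (fun v => E (v 0, v 1))
        (fun i => Fin.cases (fun x : Fin (k+2) → U => efn (⇑E) k (fun i => x i.castSucc))
          (fun _ (x : Fin (k+2) → U) => x (Fin.last (k+1))) i)
        hgmem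
        (fun i => by
          refine Fin.cases ?_ ?_ i
          · exact hr1
          · intro j
            have hj : j = 0 := Fin.fin_one_eq_zero j
            subst hj
            exact hS.proj (k+1) (Fin.last (k+1)))
      exact hr3
  -- the endomorphism w
  set w : U →[L] U := p.comp (piHom (coordFn ρ₁ ρ₂ k)) with hw
  set sw : U ↪[L] U := E.comp (pairGraph w) with hsw
  have hswmem : homOp L U sw.toHom ∈ S := hsub (Or.inl ⟨sw, rfl⟩)
  have m1 : (⟨k, fun x : Fin (k+1) → U => sw (efn (⇑E) k x)⟩ : Ops U) ∈ S :=
    hS.comp 0 k (fun v => sw.toHom (v 0)) (fun _ => efn (⇑E) k) hswmem (fun _ => memE k)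
  have m2 : (⟨k, fun x : Fin (k+1) → U => ρ₁ (sw (efn (⇑E) k x))⟩ : Ops U) ∈ S :=
    hS.comp 0 k (fun v => ρ₁ (v 0)) (fun _ => fun x : Fin (k+1) → U => sw (efn (⇑E) k x))
      hfmem (fun _ => m1)
  have hfinal : (⟨k, ⇑p⟩ : Ops U) =
      (⟨k, fun x : Fin (k+1) → U => ρ₁ (sw (efn (⇑E) k x))⟩ : Ops U) := by
    congr 1
    funext x
    show p x = ρ₁ (E (pairGraph w (efn (⇑E) k x)))
    have hp : ρ₁ (E (pairGraph w (efn (⇑E) k x))) = w (efn (⇑E) k x) :=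
      h1 (pairGraph w (efn (⇑E) k x))
    rw [hp]
    show p x = p (piHom (coordFn ρ₁ ρ₂ k) (efn (⇑E) k x))
    congr 1
    funext i
    exact (coord_efn (⇑E) ρ₁ ρ₂ h1 h2 k x i).symm
  rw [hfinal]
  exact m2

end CloneSec
end Stmt13Aux

open UHomog CloneTheory FirstOrder FirstOrder.Language in
/-- Theorem: if the Fraïssé class `K` is closed under finite products and has the HAP and the
amalgamated extension property, then `rank(Pol U : Emb U) ≤ 2`: the polymorphism clone of the
Fraïssé limit `U` is generated by `Emb U` together with one unary and one binary polymorphism. -/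
theorem statement13
    (L : FirstOrder.Language.{u, v})
    [Countable (Σ l, L.Functions l)] [Countable (Σ l, L.Relations l)]
    (K : Set (Bundled.{w} L.Structure)) (hK : IsFraisse K)
    (U : Type w) [L.Structure U] [Countable U] (hU : IsFraisseLimit K U)
    (hprod : ∀ A B : Bundled.{w} L.Structure, A ∈ K → B ∈ K →
      (Bundled.of (↥A × ↥B) : Bundled.{w} L.Structure) ∈ K)
    (hhap : HAP L K) (haep : AmalgamatedExtension L K) :
    ∃ f g : Ops U, f ∈ PolSet L U ∧ g ∈ PolSet L U ∧ f.1 = 0 ∧ g.1 = 1 ∧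
      cloneGen U (EmbOps L U ∪ {f, g}) = PolSet L U := by
  classical
  by_cases hne : Nonempty U
  · -- main case
    obtain ⟨E, ρ, hretr⟩ := Stmt13Aux.exists_retraction hK hU hhap haep hprod hne
    set ρ₁ : U →[L] U := (Stmt13Aux.fstHom (L := L) (U := U)).comp ρ with hρ₁
    refine ⟨homOp L U ρ₁, ⟨1, fun x => E (x 0, x 1)⟩,
      ⟨ρ₁.comp (Stmt13Aux.projHom 0), rfl⟩,
      ⟨E.toHom.comp (Stmt13Aux.pairHom (Stmt13Aux.projHom 0) (Stmt13Aux.projHom 1)), rfl⟩,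
      rfl, rfl, ?_⟩
    apply Set.Subset.antisymm
    · -- cloneGen ⊆ PolSet
      apply Set.sInter_subset_of_mem
      refine ⟨Stmt13Aux.polset_isClone, ?_⟩
      apply Set.union_subset Stmt13Aux.embops_subset_polset
      rintro op (rfl | rfl)
      · exact ⟨ρ₁.comp (Stmt13Aux.projHom 0), rfl⟩
      · exact ⟨E.toHom.comp (Stmt13Aux.pairHom (Stmt13Aux.projHom 0) (Stmt13Aux.projHom 1)), rfl⟩
    · -- PolSet ⊆ cloneGen
      rintro op ⟨h, hh⟩
      have hop : op = (⟨op.1, ⇑h⟩ : Ops U) := by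
        rw [hh]
        exact (Sigma.eta op).symm
      rw [hop]
      rintro S ⟨hclone, hsub⟩
      exact Stmt13Aux.gen_lemma E ρ hretr S hclone hsub op.1 h
  · -- degenerate case: U empty
    have hempty : IsEmpty U := not_nonempty_iff.mp hne
    refine ⟨⟨0, fun x => x 0⟩, ⟨1, fun x => x 0⟩,
      ⟨Stmt13Aux.projHom 0, rfl⟩, ⟨Stmt13Aux.projHom 0, rfl⟩, rfl, rfl, ?_⟩
    apply Set.Subset.antisymm
    · apply Set.sInter_subset_of_mem
      refine ⟨Stmt13Aux.polset_isClone, ?_⟩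
      apply Set.union_subset Stmt13Aux.embops_subset_polset
      rintro op (rfl | rfl)
      · exact ⟨Stmt13Aux.projHom 0, rfl⟩
      · exact ⟨Stmt13Aux.projHom 0, rfl⟩
    · rintro op ⟨h, hh⟩
      have hfn : op = (⟨op.1, fun x => x 0⟩ : Ops U) := by
        have : op.2 = fun x : Fin (op.1 + 1) → U => x 0 :=
          funext fun x => (hempty.false (x 0)).elim
        rw [← this]
        exact (Sigma.eta op).symm
      rw [hfn]
      rintro S ⟨hclone, hsub⟩
      exact hclone.proj op.1 0
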